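/- Let λ ≥ 0 and let f ∈ ST_σ^λ(φ) have Taylor coefficients aₙ. If (1+2λ)²B₁ ≤ |(1+4λ)B₁² + (B₁−B₂)(1+2λ)²|, then |a₂| ≤ B₁√B₁ / √(|(1+4λ)B₁² + (B₁−B₂)(1+2λ)²|). -/

import Mathlib

open Metric Set

noncomputable section

/-- `f` is bi-univalent on the unit disk, with `g` the univalent analytic
continuation of `f⁻¹` to the unit disk. -/
def IsBiUnivalent (f g : ℂ → ℂ) : Prop :=
  DifferentiableOn ℂ f (ball 0 1) ∧ f 0 = 0 ∧ deriv f 0 = 1 ∧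
  Set.InjOn f (ball 0 1) ∧
  DifferentiableOn ℂ g (ball 0 1) ∧ Set.InjOn g (ball 0 1) ∧
  ∀ w : ℂ, ‖w‖ < 1/4 → f (g w) = w

/-- `φ` is an analytic univalent function on the unit disk with positive real
part there, normalized by `φ 0 = 1`. -/
def IsMaMinda (φ : ℂ → ℂ) : Prop :=
  DifferentiableOn ℂ φ (ball 0 1) ∧ Set.InjOn φ (ball 0 1) ∧ φ 0 = 1 ∧
  ∀ z ∈ ball (0:ℂ) 1, 0 < (φ z).re

/-- Membership in `ST^λ(φ)`: `f` is normalized analytic on the unit disk and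
`z f'(z)/f(z) + λ z² f''(z)/f(z) ≺ φ(z)`. -/
def MemSTlam (lam : ℝ) (φ f : ℂ → ℂ) : Prop :=
  DifferentiableOn ℂ f (ball 0 1) ∧ f 0 = 0 ∧ deriv f 0 = 1 ∧
  ∃ ω : ℂ → ℂ, DifferentiableOn ℂ ω (ball 0 1) ∧ ω 0 = 0 ∧
    (∀ z ∈ ball (0:ℂ) 1, ω z ∈ ball (0:ℂ) 1) ∧
    ∀ z ∈ ball (0:ℂ) 1, z ≠ 0 →
      z * deriv f z / f z + (lam : ℂ) * (z ^ 2 * iteratedDeriv 2 f z / f z) = φ (ω z)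


open Filter

lemma normSq_mobius (u v : ℂ) :
    Complex.normSq (1 - (starRingEnd ℂ) u * v) - Complex.normSq (v - u)
      = (1 - Complex.normSq u) * (1 - Complex.normSq v) := by
  simp only [Complex.normSq_apply, Complex.mul_re, Complex.mul_im, Complex.sub_re,
    Complex.sub_im, Complex.one_re, Complex.one_im, Complex.conj_re, Complex.conj_im]
  ring

lemma schwarz2 {ω : ℂ → ℂ} (hd : DifferentiableOn ℂ ω (ball 0 1)) (h0 : ω 0 = 0)
    (hm : MapsTo ω (ball 0 1) (ball 0 1)) :
    ‖iteratedDeriv 2 ω 0‖ ≤ 2 * (1 - ‖deriv ω 0‖ ^ 2) := by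
  have h0b : (0:ℂ) ∈ ball (0:ℂ) 1 := by simp
  have hmem : ball (0:ℂ) 1 ∈ nhds (0:ℂ) := isOpen_ball.mem_nhds h0b
  set ψ := dslope ω 0 with hψdef
  have hψd : DifferentiableOn ℂ ψ (ball 0 1) := (Complex.differentiableOn_dslope hmem).mpr hd
  have hψa : AnalyticOnNhd ℂ ψ (ball 0 1) := hψd.analyticOnNhd isOpen_ball
  have hψle : ∀ z ∈ ball (0:ℂ) 1, ‖ψ z‖ ≤ 1 := by
    intro z hz
    have := Complex.norm_dslope_le_div_of_mapsTo_ball hd (by rw [h0]; exact hm.mono_right ball_subset_closedBall) hz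
    simpa using this
  have hψ0 : ψ 0 = deriv ω 0 := dslope_same ω 0
  have hfac : ω = fun z => z * ψ z := by
    funext z
    rcases eq_or_ne z 0 with rfl | hz
    · simp [h0]
    · rw [hψdef, dslope_of_ne _ hz, slope_def_field, h0]
      field_simp
      ring
  -- iteratedDeriv 2 ω 0 = 2 * deriv ψ 0
  have hωd1 : ∀ z ∈ ball (0:ℂ) 1, deriv ω z = ψ z + z * deriv ψ z := by
    intro z hz
    have h1 : HasDerivAt (fun w => w * ψ w) (1 * ψ z + z * deriv ψ z) z :=
      (hasDerivAt_id z).fun_mul ((hψd.differentiableAt (isOpen_ball.mem_nhds hz)).hasDerivAt)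
    rw [hfac]
    rw [h1.deriv]; ring
  have hkey : iteratedDeriv 2 ω 0 = 2 * deriv ψ 0 := by
    have he : deriv ω =ᶠ[nhds 0] fun z => ψ z + z * deriv ψ z :=
      eventually_of_mem hmem hωd1
    have h2 : HasDerivAt (fun z => ψ z + z * deriv ψ z)
        (deriv ψ 0 + (1 * deriv ψ 0 + 0 * deriv (deriv ψ) 0)) 0 := by
      exact ((hψd.differentiableAt hmem).hasDerivAt).add
        ((hasDerivAt_id 0).fun_mul ((hψa.deriv 0 h0b).differentiableAt.hasDerivAt))
    rw [iteratedDeriv_succ, iteratedDeriv_one, he.deriv_eq, h2.deriv]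
    ring
  by_cases hcase : ∃ z ∈ ball (0:ℂ) 1, ‖ψ z‖ = 1
  · obtain ⟨z₀, hz₀, hz₀1⟩ := hcase
    have hmax : IsMaxOn (norm ∘ ψ) (ball 0 1) z₀ := by
      intro z hz
      simp only [Function.comp_apply, Set.mem_setOf_eq, hz₀1]
      exact hψle z hz
    have heq : EqOn ψ (fun _ => ψ z₀) (ball 0 1) :=
      Complex.eqOn_of_isPreconnected_of_isMaxOn_norm (convex_ball _ _).isPreconnected
        isOpen_ball hψd hz₀ hmax
    have hd0 : deriv ψ 0 = 0 := by
      have : ψ =ᶠ[nhds 0] fun _ => ψ z₀ := eventually_of_mem hmem heq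
      rw [this.deriv_eq, deriv_const]
    have hc : ‖deriv ω 0‖ = 1 := by rw [← hψ0, heq h0b, hz₀1]
    rw [hkey, hd0, hc]
    simp
  · push_neg at hcase
    have hψlt : ∀ z ∈ ball (0:ℂ) 1, ‖ψ z‖ < 1 :=
      fun z hz => lt_of_le_of_ne (hψle z hz) (hcase z hz)
    set a := ψ 0 with hadef
    have ha : ‖a‖ < 1 := hψlt 0 h0b
    have hdenom : ∀ z ∈ ball (0:ℂ) 1, 1 - (starRingEnd ℂ) a * ψ z ≠ 0 := by
      intro z hz h
      have h1 : ‖(starRingEnd ℂ) a * ψ z‖ < 1 := by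
        rw [norm_mul, Complex.norm_conj]
        calc ‖a‖ * ‖ψ z‖ ≤ 1 * ‖ψ z‖ := by
              apply mul_le_mul_of_nonneg_right ha.le (norm_nonneg _)
          _ < 1 := by simpa using hψlt z hz
      rw [sub_eq_zero] at h
      rw [← h] at h1; simp at h1
    set χ := fun z => (ψ z - a) / (1 - (starRingEnd ℂ) a * ψ z) with hχdef
    have hχd : DifferentiableOn ℂ χ (ball 0 1) := by
      apply DifferentiableOn.div (hψd.sub (differentiableOn_const a))
        ((differentiableOn_const 1).sub ((differentiableOn_const _).mul hψd)) hdenom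
    have hχ0 : χ 0 = 0 := by simp [hχdef, ← hadef]
    have hχm : MapsTo χ (ball 0 1) (ball 0 1) := by
      intro z hz
      rw [mem_ball_zero_iff]
      have hkey2 := normSq_mobius a (ψ z)
      have h1 : 0 < (1 - Complex.normSq a) * (1 - Complex.normSq (ψ z)) := by
        apply mul_pos <;> rw [sub_pos, ← Complex.sq_norm] <;>
          [exact pow_lt_one₀ (norm_nonneg _) ha two_ne_zero;
           exact pow_lt_one₀ (norm_nonneg _) (hψlt z hz) two_ne_zero]
      have h2 : Complex.normSq (ψ z - a) < Complex.normSq (1 - (starRingEnd ℂ) a * ψ z) := by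
        nlinarith
      have h3 : ‖ψ z - a‖ < ‖1 - (starRingEnd ℂ) a * ψ z‖ := by
        rw [Complex.norm_def, Complex.norm_def]
        exact Real.sqrt_lt_sqrt (Complex.normSq_nonneg _) h2
      rw [hχdef]
      simp only [norm_div]
      rw [div_lt_one (lt_of_le_of_lt (norm_nonneg _) h3)]
      exact h3
    have hχs : ‖deriv χ 0‖ ≤ 1 :=
      Complex.norm_deriv_le_one_of_mapsTo_ball hχd (by rw [hχ0]; exact hχm.mono_right ball_subset_closedBall) one_pos
    have hM0 : (1 : ℂ) - (starRingEnd ℂ) a * a = 1 - (Complex.normSq a : ℝ) := by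
      rw [← Complex.normSq_eq_conj_mul_self]
    have hnsq : Complex.normSq a < 1 := by
      rw [← Complex.sq_norm]
      exact pow_lt_one₀ (norm_nonneg _) ha two_ne_zero
    have hM0ne : (1 : ℂ) - (starRingEnd ℂ) a * a ≠ 0 := by
      rw [hM0]
      simp only [← Complex.ofReal_one, ← Complex.ofReal_sub, Complex.ofReal_ne_zero]
      intro h
      linarith [h.symm.le]
    -- compute deriv χ 0
    have hψ0d : HasDerivAt ψ (deriv ψ 0) 0 := (hψd.differentiableAt hmem).hasDerivAt
    have hN : HasDerivAt (fun z => ψ z - a) (deriv ψ 0) 0 := hψ0d.sub_const a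
    have hMd : HasDerivAt (fun z => 1 - (starRingEnd ℂ) a * ψ z)
        (-((starRingEnd ℂ) a * deriv ψ 0)) 0 := by
      simpa using ((hψ0d.const_mul ((starRingEnd ℂ) a)).const_sub 1)
    have hχder : HasDerivAt χ
        ((deriv ψ 0 * (1 - (starRingEnd ℂ) a * ψ 0) -
          (ψ 0 - a) * -((starRingEnd ℂ) a * deriv ψ 0)) /
            (1 - (starRingEnd ℂ) a * ψ 0) ^ 2) 0 := by
      exact hN.div hMd hM0ne
    have hχ0v : deriv χ 0 = deriv ψ 0 / ((1:ℂ) - (starRingEnd ℂ) a * a) := by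
      rw [hχder.deriv, ← hadef]
      field_simp
      ring
    have hbound : ‖deriv ψ 0‖ ≤ 1 - Complex.normSq a := by
      have h1 : ‖deriv χ 0‖ =
          ‖deriv ψ 0‖ / (1 - Complex.normSq a) := by
        rw [hχ0v, norm_div, hM0]
        congr 1
        rw [show ((1:ℂ) - (Complex.normSq a:ℝ)) = ((1 - Complex.normSq a : ℝ):ℂ) by push_cast; ring,
          Complex.norm_real, Real.norm_eq_abs, abs_of_pos (by linarith)]
      rw [h1, div_le_one (by linarith)] at hχs
      linarith [hχs]
    rw [hkey, norm_mul]
    simp only [Complex.norm_two]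
    have : ‖deriv ω 0‖ ^ 2 = Complex.normSq a := by
      rw [← hψ0, Complex.sq_norm]
    rw [this]
    nlinarith [hbound]


/-- Coefficient relations for a function in `ST^λ(φ)`. -/
lemma coeff_rel (lam : ℝ) (φ f : ℂ → ℂ)
    (hφd : DifferentiableOn ℂ φ (ball 0 1)) (hφre : ∀ z ∈ ball (0:ℂ) 1, 0 < (φ z).re)
    (hφ0 : φ 0 = 1)
    (hfd : DifferentiableOn ℂ f (ball 0 1)) (hf0 : f 0 = 0) (hf1 : deriv f 0 = 1)
    (ω : ℂ → ℂ) (hωd : DifferentiableOn ℂ ω (ball 0 1)) (hω0 : ω 0 = 0)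
    (hωm : ∀ z ∈ ball (0:ℂ) 1, ω z ∈ ball (0:ℂ) 1)
    (heq : ∀ z ∈ ball (0:ℂ) 1, z ≠ 0 →
      z * deriv f z / f z + (lam : ℂ) * (z ^ 2 * iteratedDeriv 2 f z / f z) = φ (ω z)) :
    ∃ c₁ c₂ : ℂ,
      ‖c₂‖ ≤ 2 * (1 - ‖c₁‖ ^ 2) ∧
      (1 + 2*(lam:ℂ)) * iteratedDeriv 2 f 0 = 2 * deriv φ 0 * c₁ ∧
      (2 + 6*(lam:ℂ)) * iteratedDeriv 3 f 0 =
        3 * iteratedDeriv 2 φ 0 * c₁^2 + 3 * deriv φ 0 * c₂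
          + 3 * deriv φ 0 * c₁ * iteratedDeriv 2 f 0 := by
  have h0b : (0:ℂ) ∈ ball (0:ℂ) 1 := by simp
  have hmem : ball (0:ℂ) 1 ∈ nhds (0:ℂ) := isOpen_ball.mem_nhds h0b
  -- analytic families of derivatives
  have hfa : AnalyticOnNhd ℂ f (ball 0 1) := hfd.analyticOnNhd isOpen_ball
  have hωa : AnalyticOnNhd ℂ ω (ball 0 1) := hωd.analyticOnNhd isOpen_ball
  have hφa : AnalyticOnNhd ℂ φ (ball 0 1) := hφd.analyticOnNhd isOpen_ball
  set f1 := deriv f with hf1d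
  set f2 := deriv f1 with hf2d
  set f3 := deriv f2 with hf3d
  set f4 := deriv f3 with hf4d
  set ω1 := deriv ω with hω1d
  set ω2 := deriv ω1 with hω2d
  set ω3 := deriv ω2 with hω3d
  set φ1 := deriv φ with hφ1d
  set φ2 := deriv φ1 with hφ2d
  set φ3 := deriv φ2 with hφ3d
  have hf1a : AnalyticOnNhd ℂ f1 (ball 0 1) := hfa.deriv
  have hf2a : AnalyticOnNhd ℂ f2 (ball 0 1) := hf1a.deriv
  have hf3a : AnalyticOnNhd ℂ f3 (ball 0 1) := hf2a.deriv
  have hω1a : AnalyticOnNhd ℂ ω1 (ball 0 1) := hωa.deriv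
  have hω2a : AnalyticOnNhd ℂ ω2 (ball 0 1) := hω1a.deriv
  have hφ1a : AnalyticOnNhd ℂ φ1 (ball 0 1) := hφa.deriv
  have hφ2a : AnalyticOnNhd ℂ φ2 (ball 0 1) := hφ1a.deriv
  have hi2 : iteratedDeriv 2 f = f2 := by rw [iteratedDeriv_succ, iteratedDeriv_one]
  have hi3 : iteratedDeriv 3 f = f3 := by
    rw [iteratedDeriv_succ, iteratedDeriv_succ, iteratedDeriv_one]
  have hiφ2 : iteratedDeriv 2 φ = φ2 := by rw [iteratedDeriv_succ, iteratedDeriv_one]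
  -- step 0 : multiplied-out equation
  have E1 : (fun z => z * f1 z + (lam:ℂ) * (z^2 * f2 z)) =ᶠ[nhds (0:ℂ)]
      (fun z => φ (ω z) * f z) := by
    filter_upwards [hmem] with z hz
    rcases eq_or_ne z 0 with rfl | hne
    · simp [hf0]
    · have hfz : f z ≠ 0 := by
        intro hfz0
        have h := heq z hz hne
        rw [hfz0] at h
        simp only [div_zero, mul_zero, add_zero, zero_add] at h
        have hre := hφre (ω z) (hωm z hz)
        rw [← h] at hre
        simp at hre
      have h := heq z hz hne
      rw [hi2] at h
      field_simp at h
      linear_combination h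
  -- derivative facts
  have dmem : ∀ {z : ℂ}, z ∈ ball (0:ℂ) 1 → ∀ {h : ℂ → ℂ},
      AnalyticOnNhd ℂ h (ball 0 1) → DifferentiableAt ℂ h z :=
    fun hz _ ha => (ha _ hz).differentiableAt
  -- step 1 : first derivative
  have E2 : (fun z => f1 z + z * f2 z + (lam:ℂ) * (2*z*f2 z + z^2*f3 z)) =ᶠ[nhds (0:ℂ)]
      (fun z => φ1 (ω z) * ω1 z * f z + φ (ω z) * f1 z) := by
    filter_upwards [E1.deriv, hmem] with z hdz hz
    have hL : HasDerivAt (fun w => w * f1 w + (lam:ℂ) * (w^2 * f2 w))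
        (1 * f1 z + z * f2 z + (lam:ℂ) * ((2*z) * f2 z + z^2 * f3 z)) z := by
      have h1 : HasDerivAt (fun w => w * f1 w) (1 * f1 z + z * f2 z) z :=
        (hasDerivAt_id z).fun_mul (dmem hz hf1a).hasDerivAt
      have h2 : HasDerivAt (fun w : ℂ => w^2) ((2:ℕ) * z^1) z := hasDerivAt_pow 2 z
      have h3 : HasDerivAt (fun w => w^2 * f2 w) ((2*z) * f2 z + z^2 * f3 z) z := by
        have := h2.fun_mul (dmem hz hf2a).hasDerivAt
        simpa using this
      exact h1.add (h3.const_mul _)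
    have hR : HasDerivAt (fun w => φ (ω w) * f w)
        (φ1 (ω z) * ω1 z * f z + φ (ω z) * f1 z) z := by
      have hco : HasDerivAt (fun w => φ (ω w)) (φ1 (ω z) * ω1 z) z := by
        have := HasDerivAt.comp z (dmem (hωm z hz) hφa).hasDerivAt (dmem hz hωa).hasDerivAt
        simpa [Function.comp_def] using this
      have := hco.fun_mul (dmem hz hfa).hasDerivAt
      simpa using this
    have e1 : f1 z + z * f2 z + (lam:ℂ) * (2*z*f2 z + z^2*f3 z)
        = deriv (fun w => w * f1 w + (lam:ℂ) * (w^2 * f2 w)) z := by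
      rw [hL.deriv]; ring
    rw [e1, hdz, hR.deriv]
  -- step 2 : second derivative
  have E3 : (fun z => 2 * f2 z + z * f3 z + (lam:ℂ) * (2*f2 z + 4*z*f3 z + z^2*f4 z))
      =ᶠ[nhds (0:ℂ)]
      (fun z => φ2 (ω z) * ω1 z * ω1 z * f z + φ1 (ω z) * ω2 z * f z
        + 2 * (φ1 (ω z) * ω1 z * f1 z) + φ (ω z) * f2 z) := by
    filter_upwards [E2.deriv, hmem] with z hdz hz
    have hL : HasDerivAt (fun w => f1 w + w * f2 w + (lam:ℂ) * (2*w*f2 w + w^2*f3 w))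
        (f2 z + (1 * f2 z + z * f3 z)
          + (lam:ℂ) * ((2 * f2 z + 2*z*f3 z) + ((2*z) * f3 z + z^2 * f4 z))) z := by
      have h1 : HasDerivAt (fun w => w * f2 w) (1 * f2 z + z * f3 z) z :=
        (hasDerivAt_id z).fun_mul (dmem hz hf2a).hasDerivAt
      have h2 : HasDerivAt (fun w => 2*w*f2 w) (2 * f2 z + 2*z*f3 z) z := by
        have := ((hasDerivAt_id z).const_mul (2:ℂ)).fun_mul (dmem hz hf2a).hasDerivAt
        simpa [mul_comm, mul_assoc] using this
      have h3 : HasDerivAt (fun w => w^2 * f3 w) ((2*z) * f3 z + z^2 * f4 z) z := by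
        have h2' : HasDerivAt (fun w : ℂ => w^2) ((2:ℕ) * z^1) z := hasDerivAt_pow 2 z
        have := h2'.fun_mul (dmem hz hf3a).hasDerivAt
        simpa using this
      exact ((dmem hz hf1a).hasDerivAt.add h1).add ((h2.add h3).const_mul _)
    have hR : HasDerivAt (fun w => φ1 (ω w) * ω1 w * f w + φ (ω w) * f1 w)
        ((φ2 (ω z) * ω1 z * ω1 z + φ1 (ω z) * ω2 z) * f z + φ1 (ω z) * ω1 z * f1 z
          + (φ1 (ω z) * ω1 z * f1 z + φ (ω z) * f2 z)) z := by
      have hωz : HasDerivAt ω (ω1 z) z := (dmem hz hωa).hasDerivAt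
      have hco1 : HasDerivAt (fun w => φ1 (ω w)) (φ2 (ω z) * ω1 z) z := by
        have := HasDerivAt.comp z (dmem (hωm z hz) hφ1a).hasDerivAt hωz
        simpa [Function.comp_def] using this
      have hco : HasDerivAt (fun w => φ (ω w)) (φ1 (ω z) * ω1 z) z := by
        have := HasDerivAt.comp z (dmem (hωm z hz) hφa).hasDerivAt hωz
        simpa [Function.comp_def] using this
      have h1 : HasDerivAt (fun w => φ1 (ω w) * ω1 w)
          (φ2 (ω z) * ω1 z * ω1 z + φ1 (ω z) * ω2 z) z := by
        have := hco1.fun_mul (dmem hz hω1a).hasDerivAt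
        simpa [mul_assoc] using this
      have h2 : HasDerivAt (fun w => φ1 (ω w) * ω1 w * f w)
          ((φ2 (ω z) * ω1 z * ω1 z + φ1 (ω z) * ω2 z) * f z + φ1 (ω z) * ω1 z * f1 z) z :=
        h1.fun_mul (dmem hz hfa).hasDerivAt
      have h3 : HasDerivAt (fun w => φ (ω w) * f1 w)
          (φ1 (ω z) * ω1 z * f1 z + φ (ω z) * f2 z) z :=
        hco.fun_mul (dmem hz hf1a).hasDerivAt
      exact h2.add h3
    have e1 : 2 * f2 z + z * f3 z + (lam:ℂ) * (2*f2 z + 4*z*f3 z + z^2*f4 z)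
        = deriv (fun w => f1 w + w * f2 w + (lam:ℂ) * (2*w*f2 w + w^2*f3 w)) z := by
      rw [hL.deriv]; ring
    rw [e1, hdz, hR.deriv]; ring
  -- relations at 0
  rw [hi2, hi3, hiφ2]
  refine ⟨ω1 0, ω2 0, ?_, ?_, ?_⟩
  · have h := schwarz2 hωd hω0 hωm
    rw [iteratedDeriv_succ, iteratedDeriv_one] at h
    exact h
  · have h := E3.self_of_nhds
    simp only [hω0, hf0, hf1, hφ0, mul_zero, zero_mul, mul_one, one_mul,
      add_zero, zero_add, ne_eq, OfNat.ofNat_ne_zero, not_false_eq_true,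
      zero_pow, pow_two] at h
    linear_combination h
  · have h4 := E3.deriv_eq
    have hωz : HasDerivAt ω (ω1 0) 0 := (dmem h0b hωa).hasDerivAt
    have hω1z : HasDerivAt ω1 (ω2 0) 0 := (dmem h0b hω1a).hasDerivAt
    have hω2z : HasDerivAt ω2 (ω3 0) 0 := (dmem h0b hω2a).hasDerivAt
    have hfz : HasDerivAt f (f1 0) 0 := (dmem h0b hfa).hasDerivAt
    have hf1z : HasDerivAt f1 (f2 0) 0 := (dmem h0b hf1a).hasDerivAt
    have hf2z : HasDerivAt f2 (f3 0) 0 := (dmem h0b hf2a).hasDerivAt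
    have hf3z : HasDerivAt f3 (f4 0) 0 := (dmem h0b hf3a).hasDerivAt
    have hf4z : HasDerivAt f4 (deriv f4 0) 0 := (dmem h0b hf3a.deriv).hasDerivAt
    have hco : HasDerivAt (fun w => φ (ω w)) (φ1 (ω 0) * ω1 0) 0 := by
      have := HasDerivAt.comp 0 (dmem (hωm 0 h0b) hφa).hasDerivAt hωz
      simpa [Function.comp_def] using this
    have hco1 : HasDerivAt (fun w => φ1 (ω w)) (φ2 (ω 0) * ω1 0) 0 := by
      have := HasDerivAt.comp 0 (dmem (hωm 0 h0b) hφ1a).hasDerivAt hωz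
      simpa [Function.comp_def] using this
    have hco2 : HasDerivAt (fun w => φ2 (ω w)) (φ3 (ω 0) * ω1 0) 0 := by
      have := HasDerivAt.comp 0 (dmem (hωm 0 h0b) hφ2a).hasDerivAt hωz
      simpa [Function.comp_def] using this
    have hL : HasDerivAt (fun w => 2 * f2 w + w * f3 w + (lam:ℂ) * (2*f2 w + 4*w*f3 w + w^2*f4 w))
        (2 * f3 0 + (1 * f3 0 + 0 * f4 0)
          + (lam:ℂ) * (2 * f3 0 + (4 * f3 0 + 4*0*f4 0) + ((2*0) * f4 0 + 0^2 * deriv f4 0))) 0 := by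
      have h1 : HasDerivAt (fun w : ℂ => 2 * f2 w) (2 * f3 0) 0 := hf2z.const_mul _
      have h2 : HasDerivAt (fun w : ℂ => w * f3 w) (1 * f3 0 + 0 * f4 0) 0 :=
        (hasDerivAt_id 0).fun_mul hf3z
      have h3 : HasDerivAt (fun w : ℂ => 4*w*f3 w) (4 * f3 0 + 4*0*f4 0) 0 := by
        have := ((hasDerivAt_id (0:ℂ)).const_mul (4:ℂ)).fun_mul hf3z
        simpa [mul_comm, mul_assoc] using this
      have h4' : HasDerivAt (fun w : ℂ => w^2 * f4 w) ((2*0) * f4 0 + 0^2 * deriv f4 0) 0 := by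
        have hp : HasDerivAt (fun w : ℂ => w^2) ((2:ℕ) * (0:ℂ)^1) 0 := hasDerivAt_pow 2 0
        have := hp.fun_mul hf4z
        simpa using this
      exact (h1.add h2).add ((((hf2z.const_mul (2:ℂ)).add h3).add h4').const_mul _)
    have hR : HasDerivAt (fun w => φ2 (ω w) * ω1 w * ω1 w * f w + φ1 (ω w) * ω2 w * f w
        + 2 * (φ1 (ω w) * ω1 w * f1 w) + φ (ω w) * f2 w)
        ((((φ3 (ω 0) * ω1 0 * ω1 0 + φ2 (ω 0) * ω2 0) * ω1 0 + φ2 (ω 0) * ω1 0 * ω2 0) * f 0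
            + φ2 (ω 0) * ω1 0 * ω1 0 * f1 0)
          + (((φ2 (ω 0) * ω1 0 * ω2 0 + φ1 (ω 0) * ω3 0) * f 0 + φ1 (ω 0) * ω2 0 * f1 0))
          + 2 * ((φ2 (ω 0) * ω1 0 * ω1 0 + φ1 (ω 0) * ω2 0) * f1 0 + φ1 (ω 0) * ω1 0 * f2 0)
          + (φ1 (ω 0) * ω1 0 * f2 0 + φ (ω 0) * f3 0)) 0 := by
      have hPa : HasDerivAt (fun w => φ2 (ω w) * ω1 w)
          (φ3 (ω 0) * ω1 0 * ω1 0 + φ2 (ω 0) * ω2 0) 0 := by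
        have := hco2.fun_mul hω1z
        simpa [mul_assoc] using this
      have hP1 : HasDerivAt (fun w => φ2 (ω w) * ω1 w * ω1 w)
          ((φ3 (ω 0) * ω1 0 * ω1 0 + φ2 (ω 0) * ω2 0) * ω1 0 + φ2 (ω 0) * ω1 0 * ω2 0) 0 :=
        hPa.fun_mul hω1z
      have ht1 : HasDerivAt (fun w => φ2 (ω w) * ω1 w * ω1 w * f w)
          (((φ3 (ω 0) * ω1 0 * ω1 0 + φ2 (ω 0) * ω2 0) * ω1 0 + φ2 (ω 0) * ω1 0 * ω2 0) * f 0
            + φ2 (ω 0) * ω1 0 * ω1 0 * f1 0) 0 := hP1.fun_mul hfz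
      have hPb : HasDerivAt (fun w => φ1 (ω w) * ω2 w)
          (φ2 (ω 0) * ω1 0 * ω2 0 + φ1 (ω 0) * ω3 0) 0 := by
        have := hco1.fun_mul hω2z
        simpa [mul_assoc] using this
      have ht2 : HasDerivAt (fun w => φ1 (ω w) * ω2 w * f w)
          ((φ2 (ω 0) * ω1 0 * ω2 0 + φ1 (ω 0) * ω3 0) * f 0 + φ1 (ω 0) * ω2 0 * f1 0) 0 :=
        hPb.fun_mul hfz
      have hPc : HasDerivAt (fun w => φ1 (ω w) * ω1 w)
          (φ2 (ω 0) * ω1 0 * ω1 0 + φ1 (ω 0) * ω2 0) 0 := by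
        have := hco1.fun_mul hω1z
        simpa [mul_assoc] using this
      have ht3 : HasDerivAt (fun w => 2 * (φ1 (ω w) * ω1 w * f1 w))
          (2 * ((φ2 (ω 0) * ω1 0 * ω1 0 + φ1 (ω 0) * ω2 0) * f1 0 + φ1 (ω 0) * ω1 0 * f2 0)) 0 :=
        (hPc.fun_mul hf1z).const_mul _
      have ht4 : HasDerivAt (fun w => φ (ω w) * f2 w)
          (φ1 (ω 0) * ω1 0 * f2 0 + φ (ω 0) * f3 0) 0 := hco.fun_mul hf2z
      exact ((ht1.add ht2).add ht3).add ht4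
    rw [hL.deriv, hR.deriv] at h4
    simp only [hω0, hf0, hf1, hφ0, mul_zero, zero_mul, mul_one, one_mul,
      add_zero, zero_add] at h4
    linear_combination h4

/-- Coefficients of the inverse function. -/
lemma inv_coeff (f g : ℂ → ℂ)
    (hfd : DifferentiableOn ℂ f (ball 0 1)) (hf0 : f 0 = 0) (hf1 : deriv f 0 = 1)
    (hgd : DifferentiableOn ℂ g (ball 0 1)) (hg0 : g 0 = 0) (hg1 : deriv g 0 = 1)
    (hfg : ∀ w : ℂ, ‖w‖ < 1/4 → f (g w) = w) :
    iteratedDeriv 2 g 0 = - iteratedDeriv 2 f 0 ∧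
    iteratedDeriv 3 g 0 = 3 * (iteratedDeriv 2 f 0)^2 - iteratedDeriv 3 f 0 := by
  have h0b : (0:ℂ) ∈ ball (0:ℂ) 1 := by simp
  have hmem : ball (0:ℂ) 1 ∈ nhds (0:ℂ) := isOpen_ball.mem_nhds h0b
  have hfa : AnalyticOnNhd ℂ f (ball 0 1) := hfd.analyticOnNhd isOpen_ball
  have hga : AnalyticOnNhd ℂ g (ball 0 1) := hgd.analyticOnNhd isOpen_ball
  set f1 := deriv f with hf1d
  set f2 := deriv f1 with hf2d
  set f3 := deriv f2 with hf3d
  set g1 := deriv g with hg1d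
  set g2 := deriv g1 with hg2d
  set g3 := deriv g2 with hg3d
  have hf1a : AnalyticOnNhd ℂ f1 (ball 0 1) := hfa.deriv
  have hf2a : AnalyticOnNhd ℂ f2 (ball 0 1) := hf1a.deriv
  have hg1a : AnalyticOnNhd ℂ g1 (ball 0 1) := hga.deriv
  have hg2a : AnalyticOnNhd ℂ g2 (ball 0 1) := hg1a.deriv
  have hi2 : iteratedDeriv 2 f = f2 := by rw [iteratedDeriv_succ, iteratedDeriv_one]
  have hi3 : iteratedDeriv 3 f = f3 := by
    rw [iteratedDeriv_succ, iteratedDeriv_succ, iteratedDeriv_one]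
  have hgi2 : iteratedDeriv 2 g = g2 := by rw [iteratedDeriv_succ, iteratedDeriv_one]
  have hgi3 : iteratedDeriv 3 g = g3 := by
    rw [iteratedDeriv_succ, iteratedDeriv_succ, iteratedDeriv_one]
  -- good neighborhood
  have hVn : (ball (0:ℂ) (1/4) ∩ g ⁻¹' (ball 0 1)) ∈ nhds (0:ℂ) := by
    refine inter_mem (isOpen_ball.mem_nhds (mem_ball_self (by norm_num))) ?_
    exact ((hgd.differentiableAt hmem).continuousAt).preimage_mem_nhds
      (isOpen_ball.mem_nhds (by simp [hg0]))
  have hsub : ball (0:ℂ) (1/4) ⊆ ball 0 1 := ball_subset_ball (by norm_num)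
  have dmem : ∀ {z : ℂ}, z ∈ ball (0:ℂ) 1 → ∀ {h : ℂ → ℂ},
      AnalyticOnNhd ℂ h (ball 0 1) → DifferentiableAt ℂ h z :=
    fun hz _ ha => (ha _ hz).differentiableAt
  have H1 : (fun w => f (g w)) =ᶠ[nhds (0:ℂ)] (fun w => w) := by
    filter_upwards [hVn] with w hw
    exact hfg w (mem_ball_zero_iff.mp hw.1)
  have H2 : (fun w => f1 (g w) * g1 w) =ᶠ[nhds (0:ℂ)] (fun _ => (1:ℂ)) := by
    filter_upwards [H1.deriv, hVn] with w hdw hw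
    have hC : HasDerivAt (fun w => f (g w)) (f1 (g w) * g1 w) w := by
      have := HasDerivAt.comp w (dmem hw.2 hfa).hasDerivAt (dmem (hsub hw.1) hga).hasDerivAt
      simpa [Function.comp_def] using this
    rw [← hC.deriv, hdw, deriv_id'']
  have H3 : (fun w => f2 (g w) * g1 w * g1 w + f1 (g w) * g2 w) =ᶠ[nhds (0:ℂ)]
      (fun _ => (0:ℂ)) := by
    filter_upwards [H2.deriv, hVn] with w hdw hw
    have hgw : HasDerivAt g (g1 w) w := (dmem (hsub hw.1) hga).hasDerivAt
    have hco1 : HasDerivAt (fun w => f1 (g w)) (f2 (g w) * g1 w) w := by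
      have := HasDerivAt.comp w (dmem hw.2 hf1a).hasDerivAt hgw
      simpa [Function.comp_def] using this
    have hL : HasDerivAt (fun w => f1 (g w) * g1 w)
        (f2 (g w) * g1 w * g1 w + f1 (g w) * g2 w) w :=
      hco1.fun_mul (dmem (hsub hw.1) hg1a).hasDerivAt
    rw [← hL.deriv, hdw, deriv_const]
  have hrel2 : f2 0 + g2 0 = 0 := by
    have h := H3.self_of_nhds
    simpa [hg0, hg1, hf1] using h
  constructor
  · rw [hgi2, hi2]; linear_combination hrel2
  · have h4 := H3.deriv_eq
    have hgz : HasDerivAt g (g1 0) 0 := (dmem h0b hga).hasDerivAt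
    have hg1z : HasDerivAt g1 (g2 0) 0 := (dmem h0b hg1a).hasDerivAt
    have hg2z : HasDerivAt g2 (g3 0) 0 := (dmem h0b hg2a).hasDerivAt
    have hg0b : g 0 ∈ ball (0:ℂ) 1 := by rw [hg0]; exact h0b
    have hco1 : HasDerivAt (fun w => f1 (g w)) (f2 (g 0) * g1 0) 0 := by
      have := HasDerivAt.comp 0 (dmem hg0b hf1a).hasDerivAt hgz
      simpa [Function.comp_def] using this
    have hco2 : HasDerivAt (fun w => f2 (g w)) (f3 (g 0) * g1 0) 0 := by
      have := HasDerivAt.comp 0 (dmem hg0b hf2a).hasDerivAt hgz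
      simpa [Function.comp_def] using this
    have hL : HasDerivAt (fun w => f2 (g w) * g1 w * g1 w + f1 (g w) * g2 w)
        (((f3 (g 0) * g1 0 * g1 0 + f2 (g 0) * g2 0) * g1 0 + f2 (g 0) * g1 0 * g2 0)
          + (f2 (g 0) * g1 0 * g2 0 + f1 (g 0) * g3 0)) 0 := by
      have h1 : HasDerivAt (fun w => f2 (g w) * g1 w)
          (f3 (g 0) * g1 0 * g1 0 + f2 (g 0) * g2 0) 0 := by
        have := hco2.fun_mul hg1z
        simpa [mul_assoc] using this
      exact ((h1.fun_mul hg1z).add (hco1.fun_mul hg2z))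
    rw [hL.deriv, deriv_const] at h4
    simp only [hg0, hg1, hf1, mul_one, one_mul] at h4
    rw [hgi3, hi3, hi2]
    have hg2v : g2 0 = - f2 0 := by linear_combination hrel2
    rw [hg2v] at h4
    linear_combination h4

theorem stmt_0
    (lam : ℝ) (hlam : 0 ≤ lam) (φ f g : ℂ → ℂ)
    (B₁ : ℝ) (B₂ B₃ : ℂ) (hB₁ : 0 < B₁)
    (hφ : IsMaMinda φ)
    (hφ1 : deriv φ 0 = (B₁:ℂ))
    (hφ2 : iteratedDeriv 2 φ 0 = 2 * B₂)
    (hφ3 : iteratedDeriv 3 φ 0 = 6 * B₃)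
    (hbi : IsBiUnivalent f g)
    (hf : MemSTlam lam φ f) (hg : MemSTlam lam φ g)
    (a : ℕ → ℂ) (ha : ∀ n, a n = iteratedDeriv n f 0 / (n.factorial : ℂ))
    (D : ℂ) (hD : D = (1 + 4*(lam:ℂ)) * (B₁:ℂ)^2 + ((B₁:ℂ) - B₂) * (1 + 2*(lam:ℂ))^2)
    (hcond : (1 + 2*lam)^2 * B₁ ≤ ‖D‖) :
    ‖a 2‖ ≤ B₁ * Real.sqrt B₁ / Real.sqrt (‖D‖) := by
  obtain ⟨hφd, hφinj, hφ0, hφre⟩ := hφ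
  obtain ⟨hfd, hf0, hf1, ω, hωd, hω0, hωm, heqf⟩ := hf
  obtain ⟨hgd, hg0, hg1, ωg, hωgd, hωg0, hωgm, heqg⟩ := hg
  obtain ⟨c₁, c₂, hc2, hA2rel, hA3rel⟩ :=
    coeff_rel lam φ f hφd hφre hφ0 hfd hf0 hf1 ω hωd hω0 hωm heqf
  obtain ⟨d₁, d₂, hd2, hG2rel, hG3rel⟩ :=
    coeff_rel lam φ g hφd hφre hφ0 hgd hg0 hg1 ωg hωgd hωg0 hωgm heqg
  obtain ⟨hG2, hG3⟩ := inv_coeff f g hfd hf0 hf1 hgd hg0 hg1 hbi.2.2.2.2.2.2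
  set A2 := iteratedDeriv 2 f 0 with hA2def
  set A3 := iteratedDeriv 3 f 0 with hA3def
  rw [hφ1] at hA2rel hG2rel
  rw [hφ1, hφ2] at hA3rel hG3rel
  rw [hG2] at hG2rel hG3rel
  rw [hG3] at hG3rel
  have hβ : (B₁:ℂ) ≠ 0 := Complex.ofReal_ne_zero.mpr (ne_of_gt hB₁)
  have hd₁ : d₁ = -c₁ := by
    have h2 : (2*(B₁:ℂ)) * d₁ = (2*(B₁:ℂ)) * (-c₁) := by linear_combination -hG2rel - hA2rel
    exact mul_left_cancel₀ (by simpa using hβ) h2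
  rw [hd₁] at hG3rel
  have hd2' : ‖d₂‖ ≤ 2*(1 - ‖c₁‖^2) := by
    rwa [hd₁, norm_neg] at hd2
  have hkeyc : D * A2^2 = (B₁:ℂ)^3*(c₂+d₂) + (B₁:ℂ)*(1+2*(lam:ℂ))^2*A2^2 := by
    linear_combination A2^2*hD + ((B₁:ℂ)^2/3)*hA3rel + ((B₁:ℂ)^2/3)*hG3rel
      + (-(B₁:ℂ)^2*A2 - B₂*((1+2*(lam:ℂ))*A2+2*(B₁:ℂ)*c₁))*hA2rel
  have e1 : ‖1+2*(lam:ℂ)‖ = 1+2*lam := by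
    rw [show (1+2*(lam:ℂ)) = ((1+2*lam:ℝ):ℂ) by push_cast; ring, Complex.norm_real, Real.norm_eq_abs,
      abs_of_nonneg (by linarith)]
  have eB : ‖(B₁:ℂ)‖ = B₁ := by rw [Complex.norm_real, Real.norm_eq_abs, abs_of_pos hB₁]
  have habs2 : (1+2*lam) * ‖A2‖ = 2*B₁*‖c₁‖ := by
    have h := congrArg (‖·‖) hA2rel
    rw [norm_mul, norm_mul, norm_mul, e1, eB, Complex.norm_two] at h
    exact h
  have hX4 : ‖D‖ * ‖A2‖^2 ≤ 4*B₁^3 := by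
    have t1 : ‖(B₁:ℂ)^3*(c₂+d₂)‖ ≤ B₁^3*(‖c₂‖ + ‖d₂‖) := by
      rw [norm_mul, norm_pow, eB]
      exact mul_le_mul_of_nonneg_left (norm_add_le _ _) (by positivity)
    have t2 : ‖(B₁:ℂ)*(1+2*(lam:ℂ))^2*A2^2‖ = B₁*(1+2*lam)^2*‖A2‖^2 := by
      rw [norm_mul, norm_mul, norm_pow, norm_pow, eB, e1]
    have tri : ‖D‖ * ‖A2‖^2
        ≤ B₁^3*(‖c₂‖ + ‖d₂‖) + B₁*(1+2*lam)^2*‖A2‖^2 := by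
      calc ‖D‖ * ‖A2‖^2 = ‖D * A2^2‖ := by rw [norm_mul, norm_pow]
        _ = ‖(B₁:ℂ)^3*(c₂+d₂) + (B₁:ℂ)*(1+2*(lam:ℂ))^2*A2^2‖ := by rw [hkeyc]
        _ ≤ ‖(B₁:ℂ)^3*(c₂+d₂)‖ + ‖(B₁:ℂ)*(1+2*(lam:ℂ))^2*A2^2‖ :=
            norm_add_le _ _
        _ ≤ B₁^3*(‖c₂‖ + ‖d₂‖) + B₁*(1+2*lam)^2*‖A2‖^2 := by
            rw [t2]; linarith
    have hsq : ((1+2*lam)*‖A2‖)^2 = (2*B₁*‖c₁‖)^2 := by rw [habs2]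
    nlinarith [tri, hsq, mul_le_mul_of_nonneg_left hc2 (by positivity : (0:ℝ) ≤ B₁^3),
      mul_le_mul_of_nonneg_left hd2' (by positivity : (0:ℝ) ≤ B₁^3)]
  have hM : (0:ℝ) < ‖D‖ := by
    have h5 : B₁ ≤ (1+2*lam)^2*B₁ := by nlinarith [mul_nonneg (mul_nonneg hlam hlam) hB₁.le, mul_nonneg hlam hB₁.le]
    linarith
  have ha2 : ‖a 2‖ = ‖A2‖ / 2 := by
    rw [ha 2]
    rw [show ((Nat.factorial 2 : ℕ) : ℂ) = 2 by norm_num [Nat.factorial]]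
    rw [norm_div, Complex.norm_two]
  have h1 : (‖A2‖/2)^2 ≤ B₁^3 / ‖D‖ := by
    rw [le_div_iff₀ hM]
    nlinarith [hX4]
  have h2 : ‖A2‖/2 ≤ Real.sqrt (B₁^3/‖D‖) := by
    have := Real.sqrt_le_sqrt h1
    rwa [Real.sqrt_sq (by positivity)] at this
  have h3 : Real.sqrt (B₁^3/‖D‖) = B₁*Real.sqrt B₁ / Real.sqrt (‖D‖) := by
    rw [Real.sqrt_div (by positivity) _,
      show B₁^3 = B₁^2*B₁ by ring, Real.sqrt_mul (sq_nonneg _), Real.sqrt_sq hB₁.le]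
  rw [ha2, ← h3]
  exact h2
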